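/- Let X be a random field on [0,∞)² with self-similar covariance of index (H₁,H₂), H₁, H₂ ∈ (0,1), with second-moment stationary rectangular increments and E[X(1,1)²] = 1. Define R : ℝ² → ℝ by R(v₁,v₂) = e^{−H₁v₁ − H₂v₂}·E[X(1,1)·X(e^{v₁}, e^{v₂})] (the covariance function of the Lamperti transform of X). Then for all v = (v₁,v₂) ∈ ℝ²: R(v₁,v₂) + R(v₁,−v₂) = (1/2)·F_{H₁}(v₁)·F_{H₂}(v₂) = 2·R₀(v₁,v₂). -/

import Mathlib

open MeasureTheory Real

/-- `F_H(v) = 2 cosh(Hv) - |2 sinh(v/2)|^{2H}`. -/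
noncomputable def Ffun (H v : ℝ) : ℝ :=
  2 * Real.cosh (H * v) - |2 * Real.sinh (v / 2)| ^ (2 * H)

/-- `R₀(v₁,v₂) = (1/4) F_{H₁}(v₁) F_{H₂}(v₂)`. -/
noncomputable def Rzero (H₁ H₂ v₁ v₂ : ℝ) : ℝ :=
  (1 / 4) * Ffun H₁ v₁ * Ffun H₂ v₂


section Aux
variable {Ω : Type*} [MeasurableSpace Ω] {P : Measure Ω} {H₁ H₂ : ℝ} {X : ℝ → ℝ → Ω → ℝ}

lemma lam_abs_mul_le (x y : ℝ) : |x * y| ≤ (x ^ 2 + y ^ 2) / 2 := by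
  rw [abs_mul]
  nlinarith [sq_nonneg (|x| - |y|), sq_abs x, sq_abs y, abs_nonneg x, abs_nonneg y]

/-- gluing lemma: measurability of a diagonal product from edge products. -/
lemma lam_glue {A B C D : Ω → ℝ}
    (hAC : AEStronglyMeasurable (fun ω => A ω * C ω) P)
    (hCB : AEStronglyMeasurable (fun ω => C ω * B ω) P)
    (hAD : AEStronglyMeasurable (fun ω => A ω * D ω) P)
    (hDB : AEStronglyMeasurable (fun ω => D ω * B ω) P)
    (hC2 : AEStronglyMeasurable (fun ω => C ω * C ω) P)
    (hD2 : AEStronglyMeasurable (fun ω => D ω * D ω) P)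
    (hs : AEStronglyMeasurable (fun ω => A ω * B ω + C ω * D ω) P) :
    AEStronglyMeasurable (fun ω => A ω * B ω) P := by
  classical
  set ac := hAC.mk _ with hac
  set cb := hCB.mk _ with hcb
  set ad := hAD.mk _ with had
  set db := hDB.mk _ with hdb
  set c2 := hC2.mk _ with hc2
  set d2 := hD2.mk _ with hd2
  set s := hs.mk _ with hsdef
  have mac := hAC.stronglyMeasurable_mk.measurable
  have mcb := hCB.stronglyMeasurable_mk.measurable
  have mad := hAD.stronglyMeasurable_mk.measurable
  have mdb := hDB.stronglyMeasurable_mk.measurable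
  have mc2 := hC2.stronglyMeasurable_mk.measurable
  have md2 := hD2.stronglyMeasurable_mk.measurable
  have ms := hs.stronglyMeasurable_mk.measurable
  set g : Ω → ℝ := fun ω =>
    if c2 ω ≠ 0 then ac ω * cb ω / c2 ω
    else if d2 ω ≠ 0 then ad ω * db ω / d2 ω
    else s ω with hg
  have hgm : Measurable g := by
    apply Measurable.ite
    · exact (measurableSet_singleton (0:ℝ)).preimage mc2 |>.compl
    · exact ((mac.mul mcb).div mc2)
    · apply Measurable.ite
      · exact (measurableSet_singleton (0:ℝ)).preimage md2 |>.compl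
      · exact ((mad.mul mdb).div md2)
      · exact ms
  refine ⟨g, hgm.stronglyMeasurable, ?_⟩
  filter_upwards [hAC.ae_eq_mk, hCB.ae_eq_mk, hAD.ae_eq_mk, hDB.ae_eq_mk,
    hC2.ae_eq_mk, hD2.ae_eq_mk, hs.ae_eq_mk] with ω e1 e2 e3 e4 e5 e6 e7
  simp only [hg]
  by_cases h1 : c2 ω ≠ 0
  · rw [if_pos h1, ← hac, ← hcb, ← hc2] at *
    rw [← e1, ← e2, ← e5]
    have hC : C ω ≠ 0 := by
      intro h; apply h1; rw [← e5, h, mul_zero]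
    field_simp
  · rw [if_neg h1]
    have hC : C ω = 0 := by
      have : C ω * C ω = 0 := by rw [e5]; simpa using h1
      exact mul_self_eq_zero.mp this
    by_cases h2 : d2 ω ≠ 0
    · rw [if_pos h2, had, hdb, hd2, ← e3, ← e4, ← e6]
      have hD : D ω ≠ 0 := by
        intro h; apply h2; rw [hd2, ← e6, h, mul_zero]
      field_simp
    · rw [if_neg h2]
      have hD : D ω = 0 := by
        have : D ω * D ω = 0 := by rw [e6]; simpa using h2
        exact mul_self_eq_zero.mp this
      rw [hsdef, ← e7, hC, hD]
      ring

end Aux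


section Aux2
variable {Ω : Type*} [MeasurableSpace Ω] {P : Measure Ω} {H₁ H₂ : ℝ} {X : ℝ → ℝ → Ω → ℝ}

/-- diagonal second moment -/
lemma lam_diag
    (hss : ∀ a₁ a₂ : ℝ, 0 < a₁ → 0 < a₂ →
      ∀ t₁ t₂ s₁ s₂ : ℝ, 0 ≤ t₁ → 0 ≤ t₂ → 0 ≤ s₁ → 0 ≤ s₂ →
        ∫ ω, X (a₁ * t₁) (a₂ * t₂) ω * X (a₁ * s₁) (a₂ * s₂) ω ∂P
          = a₁ ^ (2 * H₁) * a₂ ^ (2 * H₂) * ∫ ω, X t₁ t₂ ω * X s₁ s₂ ω ∂P)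
    (hnorm : ∫ ω, (X 1 1 ω) ^ 2 ∂P = 1)
    {x y : ℝ} (hx : 0 < x) (hy : 0 < y) :
    ∫ ω, (X x y ω) ^ 2 ∂P = x ^ (2 * H₁) * y ^ (2 * H₂) := by
  have h := hss x y hx hy 1 1 1 1 zero_le_one zero_le_one zero_le_one zero_le_one
  simp only [mul_one] at h
  have e1 : ∫ ω, X x y ω * X x y ω ∂P = ∫ ω, (X x y ω) ^ 2 ∂P := by
    congr 1; funext ω; ring
  have e2 : ∫ ω, X 1 1 ω * X 1 1 ω ∂P = ∫ ω, (X 1 1 ω) ^ 2 ∂P := by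
    congr 1; funext ω; ring
  rw [e1, e2, hnorm, mul_one] at h
  exact h

/-- horizontal axis vanishes a.e. -/
lemma lam_axis_h
    (hH₂ : 0 < H₂)
    (hL2 : ∀ t₁ t₂ : ℝ, 0 ≤ t₁ → 0 ≤ t₂ → Integrable (fun ω => (X t₁ t₂ ω) ^ 2) P)
    (hss : ∀ a₁ a₂ : ℝ, 0 < a₁ → 0 < a₂ →
      ∀ t₁ t₂ s₁ s₂ : ℝ, 0 ≤ t₁ → 0 ≤ t₂ → 0 ≤ s₁ → 0 ≤ s₂ →
        ∫ ω, X (a₁ * t₁) (a₂ * t₂) ω * X (a₁ * s₁) (a₂ * s₂) ω ∂P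
          = a₁ ^ (2 * H₁) * a₂ ^ (2 * H₂) * ∫ ω, X t₁ t₂ ω * X s₁ s₂ ω ∂P)
    {x : ℝ} (hx : 0 ≤ x) :
    (fun ω => X x 0 ω) =ᵐ[P] 0 := by
  have h := hss 1 2 one_pos two_pos x 0 x 0 hx le_rfl hx le_rfl
  simp only [one_mul, mul_zero, Real.one_rpow] at h
  have hgt : (1:ℝ) < (2:ℝ) ^ (2 * H₂) :=
    Real.one_lt_rpow_iff_of_pos two_pos |>.mpr (Or.inl ⟨one_lt_two, by linarith⟩)
  have hI : ∫ ω, X x 0 ω * X x 0 ω ∂P = 0 := by nlinarith [h]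
  have e1 : ∫ ω, (X x 0 ω) ^ 2 ∂P = 0 := by
    rw [show (fun ω => (X x 0 ω) ^ 2) = fun ω => X x 0 ω * X x 0 ω from funext fun ω => by ring]
    exact hI
  have hz := (integral_eq_zero_iff_of_nonneg (fun ω => sq_nonneg (X x 0 ω))
    (hL2 x 0 hx le_rfl)).mp e1
  filter_upwards [hz] with ω hω
  simpa using pow_eq_zero_iff (n := 2) (by norm_num) |>.mp hω

/-- vertical axis vanishes a.e. -/
lemma lam_axis_v
    (hH₁ : 0 < H₁)
    (hL2 : ∀ t₁ t₂ : ℝ, 0 ≤ t₁ → 0 ≤ t₂ → Integrable (fun ω => (X t₁ t₂ ω) ^ 2) P)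
    (hss : ∀ a₁ a₂ : ℝ, 0 < a₁ → 0 < a₂ →
      ∀ t₁ t₂ s₁ s₂ : ℝ, 0 ≤ t₁ → 0 ≤ t₂ → 0 ≤ s₁ → 0 ≤ s₂ →
        ∫ ω, X (a₁ * t₁) (a₂ * t₂) ω * X (a₁ * s₁) (a₂ * s₂) ω ∂P
          = a₁ ^ (2 * H₁) * a₂ ^ (2 * H₂) * ∫ ω, X t₁ t₂ ω * X s₁ s₂ ω ∂P)
    {y : ℝ} (hy : 0 ≤ y) :
    (fun ω => X 0 y ω) =ᵐ[P] 0 := by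
  have h := hss 2 1 two_pos one_pos 0 y 0 y le_rfl hy le_rfl hy
  simp only [one_mul, mul_zero, Real.one_rpow] at h
  have hgt : (1:ℝ) < (2:ℝ) ^ (2 * H₁) :=
    Real.one_lt_rpow_iff_of_pos two_pos |>.mpr (Or.inl ⟨one_lt_two, by linarith⟩)
  have hI : ∫ ω, X 0 y ω * X 0 y ω ∂P = 0 := by nlinarith [h]
  have e1 : ∫ ω, (X 0 y ω) ^ 2 ∂P = 0 := by
    rw [show (fun ω => (X 0 y ω) ^ 2) = fun ω => X 0 y ω * X 0 y ω from funext fun ω => by ring]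
    exact hI
  have hz := (integral_eq_zero_iff_of_nonneg (fun ω => sq_nonneg (X 0 y ω))
    (hL2 0 y le_rfl hy)).mp e1
  filter_upwards [hz] with ω hω
  simpa using pow_eq_zero_iff (n := 2) (by norm_num) |>.mp hω

end Aux2


section Aux3
variable {Ω : Type*} [MeasurableSpace Ω] {P : Measure Ω} {H₁ H₂ : ℝ} {X : ℝ → ℝ → Ω → ℝ}

lemma lam_rect
    (hH₁ : 0 < H₁) (hH₂ : 0 < H₂)
    (hL2 : ∀ t₁ t₂ : ℝ, 0 ≤ t₁ → 0 ≤ t₂ → Integrable (fun ω => (X t₁ t₂ ω) ^ 2) P)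
    (hss : ∀ a₁ a₂ : ℝ, 0 < a₁ → 0 < a₂ →
      ∀ t₁ t₂ s₁ s₂ : ℝ, 0 ≤ t₁ → 0 ≤ t₂ → 0 ≤ s₁ → 0 ≤ s₂ →
        ∫ ω, X (a₁ * t₁) (a₂ * t₂) ω * X (a₁ * s₁) (a₂ * s₂) ω ∂P
          = a₁ ^ (2 * H₁) * a₂ ^ (2 * H₂) * ∫ ω, X t₁ t₂ ω * X s₁ s₂ ω ∂P)
    (hsi : ∀ u₁ u₂ h₁ h₂ : ℝ, 0 ≤ u₁ → 0 ≤ u₂ → 0 ≤ h₁ → 0 ≤ h₂ →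
      ∫ ω, (X (u₁ + h₁) (u₂ + h₂) ω - X u₁ (u₂ + h₂) ω
            - X (u₁ + h₁) u₂ ω + X u₁ u₂ ω) ^ 2 ∂P
        = ∫ ω, (X h₁ h₂ ω - X 0 h₂ ω - X h₁ 0 ω + X 0 0 ω) ^ 2 ∂P)
    (hnorm : ∫ ω, (X 1 1 ω) ^ 2 ∂P = 1)
    {u₁ u₂ h₁ h₂ : ℝ} (hu₁ : 0 ≤ u₁) (hu₂ : 0 ≤ u₂) (hh₁ : 0 < h₁) (hh₂ : 0 < h₂) :
    (∫ ω, (X (u₁ + h₁) (u₂ + h₂) ω - X u₁ (u₂ + h₂) ω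
            - X (u₁ + h₁) u₂ ω + X u₁ u₂ ω) ^ 2 ∂P = h₁ ^ (2 * H₁) * h₂ ^ (2 * H₂))
    ∧ Integrable (fun ω => (X (u₁ + h₁) (u₂ + h₂) ω - X u₁ (u₂ + h₂) ω
            - X (u₁ + h₁) u₂ ω + X u₁ u₂ ω) ^ 2) P := by
  have key := hsi u₁ u₂ h₁ h₂ hu₁ hu₂ hh₁.le hh₂.le
  have hz1 := lam_axis_v (X := X) (P := P) (H₁ := H₁) (H₂ := H₂) hH₁ hL2 hss hh₂.le
  have hz2 := lam_axis_h (X := X) (P := P) (H₁ := H₁) (H₂ := H₂) hH₂ hL2 hss hh₁.le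
  have hz3 := lam_axis_h (X := X) (P := P) (H₁ := H₁) (H₂ := H₂) hH₂ hL2 hss (le_refl (0:ℝ))
  have hcong : (fun ω => (X h₁ h₂ ω - X 0 h₂ ω - X h₁ 0 ω + X 0 0 ω) ^ 2)
      =ᵐ[P] (fun ω => (X h₁ h₂ ω) ^ 2) := by
    filter_upwards [hz1, hz2, hz3] with ω e1 e2 e3
    simp only [Pi.zero_apply] at e1 e2 e3
    rw [e1, e2, e3]; ring
  have hval : ∫ ω, (X h₁ h₂ ω - X 0 h₂ ω - X h₁ 0 ω + X 0 0 ω) ^ 2 ∂P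
      = h₁ ^ (2 * H₁) * h₂ ^ (2 * H₂) := by
    rw [integral_congr_ae hcong]
    exact lam_diag hss hnorm hh₁ hh₂
  have hLv := key.trans hval
  refine ⟨hLv, ?_⟩
  by_contra hni
  rw [integral_undef hni] at hLv
  have hpos : 0 < h₁ ^ (2 * H₁) * h₂ ^ (2 * H₂) :=
    mul_pos (Real.rpow_pos_of_pos hh₁ _) (Real.rpow_pos_of_pos hh₂ _)
  linarith
end Aux3

section Aux4
variable {Ω : Type*} [MeasurableSpace Ω] {P : Measure Ω} {H₁ H₂ : ℝ} {X : ℝ → ℝ → Ω → ℝ}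

/-- horizontal edge: square of increments along first coordinate. -/
lemma lam_edge_h
    (hH₁ : 0 < H₁) (hH₂ : 0 < H₂)
    (hL2 : ∀ t₁ t₂ : ℝ, 0 ≤ t₁ → 0 ≤ t₂ → Integrable (fun ω => (X t₁ t₂ ω) ^ 2) P)
    (hss : ∀ a₁ a₂ : ℝ, 0 < a₁ → 0 < a₂ →
      ∀ t₁ t₂ s₁ s₂ : ℝ, 0 ≤ t₁ → 0 ≤ t₂ → 0 ≤ s₁ → 0 ≤ s₂ →
        ∫ ω, X (a₁ * t₁) (a₂ * t₂) ω * X (a₁ * s₁) (a₂ * s₂) ω ∂P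
          = a₁ ^ (2 * H₁) * a₂ ^ (2 * H₂) * ∫ ω, X t₁ t₂ ω * X s₁ s₂ ω ∂P)
    (hsi : ∀ u₁ u₂ h₁ h₂ : ℝ, 0 ≤ u₁ → 0 ≤ u₂ → 0 ≤ h₁ → 0 ≤ h₂ →
      ∫ ω, (X (u₁ + h₁) (u₂ + h₂) ω - X u₁ (u₂ + h₂) ω
            - X (u₁ + h₁) u₂ ω + X u₁ u₂ ω) ^ 2 ∂P
        = ∫ ω, (X h₁ h₂ ω - X 0 h₂ ω - X h₁ 0 ω + X 0 0 ω) ^ 2 ∂P)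
    (hnorm : ∫ ω, (X 1 1 ω) ^ 2 ∂P = 1)
    {x y z : ℝ} (hx : 0 < x) (hy : 0 < y) (hz : 0 < z) :
    (∫ ω, (X x z ω - X y z ω) ^ 2 ∂P = |x - y| ^ (2 * H₁) * z ^ (2 * H₂))
    ∧ Integrable (fun ω => (X x z ω - X y z ω) ^ 2) P := by
  rcases lt_trichotomy x y with h | h | h
  · obtain ⟨hval, hint⟩ := lam_rect (X := X) hH₁ hH₂ hL2 hss hsi hnorm
      (u₁ := x) (u₂ := 0) (h₁ := y - x) (h₂ := z) hx.le le_rfl (by linarith) hz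
    simp only [show x + (y - x) = y from by ring, zero_add] at hval hint
    have hz1 := lam_axis_h (X := X) (P := P) (H₁ := H₁) (H₂ := H₂) hH₂ hL2 hss hy.le
    have hz2 := lam_axis_h (X := X) (P := P) (H₁ := H₁) (H₂ := H₂) hH₂ hL2 hss hx.le
    have hcong : (fun ω => (X y z ω - X x z ω - X y 0 ω + X x 0 ω) ^ 2)
        =ᵐ[P] (fun ω => (X x z ω - X y z ω) ^ 2) := by
      filter_upwards [hz1, hz2] with ω e1 e2
      simp only [Pi.zero_apply] at e1 e2
      rw [e1, e2]; ring
    constructor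
    · rw [← integral_congr_ae hcong, hval, abs_of_neg (by linarith : x - y < 0)]
      ring_nf
    · exact hint.congr hcong
  · subst h
    constructor
    · simp only [sub_self, abs_zero]
      rw [Real.zero_rpow (by positivity : 2 * H₁ ≠ 0), zero_mul]
      simp
    · simp only [sub_self]
      simp [integrable_const]
  · obtain ⟨hval, hint⟩ := lam_rect (X := X) hH₁ hH₂ hL2 hss hsi hnorm
      (u₁ := y) (u₂ := 0) (h₁ := x - y) (h₂ := z) hy.le le_rfl (by linarith) hz
    simp only [show y + (x - y) = x from by ring, zero_add] at hval hint
    have hz1 := lam_axis_h (X := X) (P := P) (H₁ := H₁) (H₂ := H₂) hH₂ hL2 hss hy.le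
    have hz2 := lam_axis_h (X := X) (P := P) (H₁ := H₁) (H₂ := H₂) hH₂ hL2 hss hx.le
    have hcong : (fun ω => (X x z ω - X y z ω - X x 0 ω + X y 0 ω) ^ 2)
        =ᵐ[P] (fun ω => (X x z ω - X y z ω) ^ 2) := by
      filter_upwards [hz1, hz2] with ω e1 e2
      simp only [Pi.zero_apply] at e1 e2
      rw [e1, e2]; ring
    constructor
    · rw [← integral_congr_ae hcong, hval, abs_of_pos (by linarith : 0 < x - y)]
    · exact hint.congr hcong

/-- vertical edge. -/
lemma lam_edge_v
    (hH₁ : 0 < H₁) (hH₂ : 0 < H₂)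
    (hL2 : ∀ t₁ t₂ : ℝ, 0 ≤ t₁ → 0 ≤ t₂ → Integrable (fun ω => (X t₁ t₂ ω) ^ 2) P)
    (hss : ∀ a₁ a₂ : ℝ, 0 < a₁ → 0 < a₂ →
      ∀ t₁ t₂ s₁ s₂ : ℝ, 0 ≤ t₁ → 0 ≤ t₂ → 0 ≤ s₁ → 0 ≤ s₂ →
        ∫ ω, X (a₁ * t₁) (a₂ * t₂) ω * X (a₁ * s₁) (a₂ * s₂) ω ∂P
          = a₁ ^ (2 * H₁) * a₂ ^ (2 * H₂) * ∫ ω, X t₁ t₂ ω * X s₁ s₂ ω ∂P)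
    (hsi : ∀ u₁ u₂ h₁ h₂ : ℝ, 0 ≤ u₁ → 0 ≤ u₂ → 0 ≤ h₁ → 0 ≤ h₂ →
      ∫ ω, (X (u₁ + h₁) (u₂ + h₂) ω - X u₁ (u₂ + h₂) ω
            - X (u₁ + h₁) u₂ ω + X u₁ u₂ ω) ^ 2 ∂P
        = ∫ ω, (X h₁ h₂ ω - X 0 h₂ ω - X h₁ 0 ω + X 0 0 ω) ^ 2 ∂P)
    (hnorm : ∫ ω, (X 1 1 ω) ^ 2 ∂P = 1)
    {x z w : ℝ} (hx : 0 < x) (hz : 0 < z) (hw : 0 < w) :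
    (∫ ω, (X x z ω - X x w ω) ^ 2 ∂P = x ^ (2 * H₁) * |z - w| ^ (2 * H₂))
    ∧ Integrable (fun ω => (X x z ω - X x w ω) ^ 2) P := by
  rcases lt_trichotomy z w with h | h | h
  · obtain ⟨hval, hint⟩ := lam_rect (X := X) hH₁ hH₂ hL2 hss hsi hnorm
      (u₁ := 0) (u₂ := z) (h₁ := x) (h₂ := w - z) le_rfl hz.le hx (by linarith)
    simp only [show z + (w - z) = w from by ring, zero_add] at hval hint
    have hz1 := lam_axis_v (X := X) (P := P) (H₁ := H₁) (H₂ := H₂) hH₁ hL2 hss hw.le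
    have hz2 := lam_axis_v (X := X) (P := P) (H₁ := H₁) (H₂ := H₂) hH₁ hL2 hss hz.le
    have hcong : (fun ω => (X x w ω - X 0 w ω - X x z ω + X 0 z ω) ^ 2)
        =ᵐ[P] (fun ω => (X x z ω - X x w ω) ^ 2) := by
      filter_upwards [hz1, hz2] with ω e1 e2
      simp only [Pi.zero_apply] at e1 e2
      rw [e1, e2]; ring
    constructor
    · rw [← integral_congr_ae hcong, hval, abs_of_neg (by linarith : z - w < 0)]
      ring_nf
    · exact hint.congr hcong
  · subst h
    constructor
    · simp only [sub_self, abs_zero]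
      rw [Real.zero_rpow (by positivity : 2 * H₂ ≠ 0), mul_zero]
      simp
    · simp only [sub_self]
      simp [integrable_const]
  · obtain ⟨hval, hint⟩ := lam_rect (X := X) hH₁ hH₂ hL2 hss hsi hnorm
      (u₁ := 0) (u₂ := w) (h₁ := x) (h₂ := z - w) le_rfl hw.le hx (by linarith)
    simp only [show w + (z - w) = z from by ring, zero_add] at hval hint
    have hz1 := lam_axis_v (X := X) (P := P) (H₁ := H₁) (H₂ := H₂) hH₁ hL2 hss hw.le
    have hz2 := lam_axis_v (X := X) (P := P) (H₁ := H₁) (H₂ := H₂) hH₁ hL2 hss hz.le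
    have hcong : (fun ω => (X x z ω - X 0 z ω - X x w ω + X 0 w ω) ^ 2)
        =ᵐ[P] (fun ω => (X x z ω - X x w ω) ^ 2) := by
      filter_upwards [hz1, hz2] with ω e1 e2
      simp only [Pi.zero_apply] at e1 e2
      rw [e1, e2]; ring
    constructor
    · rw [← integral_congr_ae hcong, hval, abs_of_pos (by linarith : 0 < z - w)]
    · exact hint.congr hcong

end Aux4

section Aux5
variable {Ω : Type*} [MeasurableSpace Ω] {P : Measure Ω} {H₁ H₂ : ℝ} {X : ℝ → ℝ → Ω → ℝ}

/-- horizontal edge product -/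
lemma lam_prod_h
    (hH₁ : 0 < H₁) (hH₂ : 0 < H₂)
    (hL2 : ∀ t₁ t₂ : ℝ, 0 ≤ t₁ → 0 ≤ t₂ → Integrable (fun ω => (X t₁ t₂ ω) ^ 2) P)
    (hss : ∀ a₁ a₂ : ℝ, 0 < a₁ → 0 < a₂ →
      ∀ t₁ t₂ s₁ s₂ : ℝ, 0 ≤ t₁ → 0 ≤ t₂ → 0 ≤ s₁ → 0 ≤ s₂ →
        ∫ ω, X (a₁ * t₁) (a₂ * t₂) ω * X (a₁ * s₁) (a₂ * s₂) ω ∂P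
          = a₁ ^ (2 * H₁) * a₂ ^ (2 * H₂) * ∫ ω, X t₁ t₂ ω * X s₁ s₂ ω ∂P)
    (hsi : ∀ u₁ u₂ h₁ h₂ : ℝ, 0 ≤ u₁ → 0 ≤ u₂ → 0 ≤ h₁ → 0 ≤ h₂ →
      ∫ ω, (X (u₁ + h₁) (u₂ + h₂) ω - X u₁ (u₂ + h₂) ω
            - X (u₁ + h₁) u₂ ω + X u₁ u₂ ω) ^ 2 ∂P
        = ∫ ω, (X h₁ h₂ ω - X 0 h₂ ω - X h₁ 0 ω + X 0 0 ω) ^ 2 ∂P)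
    (hnorm : ∫ ω, (X 1 1 ω) ^ 2 ∂P = 1)
    {x y z : ℝ} (hx : 0 < x) (hy : 0 < y) (hz : 0 < z) :
    Integrable (fun ω => X x z ω * X y z ω) P
    ∧ ∫ ω, X x z ω * X y z ω ∂P
        = (x ^ (2 * H₁) + y ^ (2 * H₁) - |x - y| ^ (2 * H₁)) / 2 * z ^ (2 * H₂) := by
  obtain ⟨hev, hei⟩ := lam_edge_h (X := X) hH₁ hH₂ hL2 hss hsi hnorm hx hy hz
  have i1 := hL2 x z hx.le hz.le
  have i2 := hL2 y z hy.le hz.le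
  have hfun : (fun ω => X x z ω * X y z ω)
      = fun ω => ((X x z ω) ^ 2 + (X y z ω) ^ 2 - (X x z ω - X y z ω) ^ 2) / 2 :=
    funext fun ω => by ring
  have i12 : Integrable (fun ω => (X x z ω) ^ 2 + (X y z ω) ^ 2) P := i1.add i2
  constructor
  · rw [hfun]; exact (i12.sub hei).div_const 2
  · rw [hfun, integral_div, integral_sub i12 hei, integral_add i1 i2,
      lam_diag hss hnorm hx hz, lam_diag hss hnorm hy hz, hev]
    ring

/-- vertical edge product -/
lemma lam_prod_v
    (hH₁ : 0 < H₁) (hH₂ : 0 < H₂)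
    (hL2 : ∀ t₁ t₂ : ℝ, 0 ≤ t₁ → 0 ≤ t₂ → Integrable (fun ω => (X t₁ t₂ ω) ^ 2) P)
    (hss : ∀ a₁ a₂ : ℝ, 0 < a₁ → 0 < a₂ →
      ∀ t₁ t₂ s₁ s₂ : ℝ, 0 ≤ t₁ → 0 ≤ t₂ → 0 ≤ s₁ → 0 ≤ s₂ →
        ∫ ω, X (a₁ * t₁) (a₂ * t₂) ω * X (a₁ * s₁) (a₂ * s₂) ω ∂P
          = a₁ ^ (2 * H₁) * a₂ ^ (2 * H₂) * ∫ ω, X t₁ t₂ ω * X s₁ s₂ ω ∂P)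
    (hsi : ∀ u₁ u₂ h₁ h₂ : ℝ, 0 ≤ u₁ → 0 ≤ u₂ → 0 ≤ h₁ → 0 ≤ h₂ →
      ∫ ω, (X (u₁ + h₁) (u₂ + h₂) ω - X u₁ (u₂ + h₂) ω
            - X (u₁ + h₁) u₂ ω + X u₁ u₂ ω) ^ 2 ∂P
        = ∫ ω, (X h₁ h₂ ω - X 0 h₂ ω - X h₁ 0 ω + X 0 0 ω) ^ 2 ∂P)
    (hnorm : ∫ ω, (X 1 1 ω) ^ 2 ∂P = 1)
    {x z w : ℝ} (hx : 0 < x) (hz : 0 < z) (hw : 0 < w) :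
    Integrable (fun ω => X x z ω * X x w ω) P
    ∧ ∫ ω, X x z ω * X x w ω ∂P
        = x ^ (2 * H₁) * ((z ^ (2 * H₂) + w ^ (2 * H₂) - |z - w| ^ (2 * H₂)) / 2) := by
  obtain ⟨hev, hei⟩ := lam_edge_v (X := X) hH₁ hH₂ hL2 hss hsi hnorm hx hz hw
  have i1 := hL2 x z hx.le hz.le
  have i2 := hL2 x w hx.le hw.le
  have hfun : (fun ω => X x z ω * X x w ω)
      = fun ω => ((X x z ω) ^ 2 + (X x w ω) ^ 2 - (X x z ω - X x w ω) ^ 2) / 2 :=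
    funext fun ω => by ring
  have i12 : Integrable (fun ω => (X x z ω) ^ 2 + (X x w ω) ^ 2) P := i1.add i2
  constructor
  · rw [hfun]; exact (i12.sub hei).div_const 2
  · rw [hfun, integral_div, integral_sub i12 hei, integral_add i1 i2,
      lam_diag hss hnorm hx hz, lam_diag hss hnorm hx hw, hev]
    ring

/-- 4-corner rectangle square, general orientation -/
lemma lam_rect_sq
    (hH₁ : 0 < H₁) (hH₂ : 0 < H₂)
    (hL2 : ∀ t₁ t₂ : ℝ, 0 ≤ t₁ → 0 ≤ t₂ → Integrable (fun ω => (X t₁ t₂ ω) ^ 2) P)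
    (hss : ∀ a₁ a₂ : ℝ, 0 < a₁ → 0 < a₂ →
      ∀ t₁ t₂ s₁ s₂ : ℝ, 0 ≤ t₁ → 0 ≤ t₂ → 0 ≤ s₁ → 0 ≤ s₂ →
        ∫ ω, X (a₁ * t₁) (a₂ * t₂) ω * X (a₁ * s₁) (a₂ * s₂) ω ∂P
          = a₁ ^ (2 * H₁) * a₂ ^ (2 * H₂) * ∫ ω, X t₁ t₂ ω * X s₁ s₂ ω ∂P)
    (hsi : ∀ u₁ u₂ h₁ h₂ : ℝ, 0 ≤ u₁ → 0 ≤ u₂ → 0 ≤ h₁ → 0 ≤ h₂ →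
      ∫ ω, (X (u₁ + h₁) (u₂ + h₂) ω - X u₁ (u₂ + h₂) ω
            - X (u₁ + h₁) u₂ ω + X u₁ u₂ ω) ^ 2 ∂P
        = ∫ ω, (X h₁ h₂ ω - X 0 h₂ ω - X h₁ 0 ω + X 0 0 ω) ^ 2 ∂P)
    (hnorm : ∫ ω, (X 1 1 ω) ^ 2 ∂P = 1)
    {x y z w : ℝ} (hx : 0 < x) (hy : 0 < y) (hz : 0 < z) (hw : 0 < w) :
    (∫ ω, (X x z ω - X y z ω - X x w ω + X y w ω) ^ 2 ∂P
        = |x - y| ^ (2 * H₁) * |z - w| ^ (2 * H₂))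
    ∧ Integrable (fun ω => (X x z ω - X y z ω - X x w ω + X y w ω) ^ 2) P := by
  rcases eq_or_ne x y with h | hxy
  · subst h
    have hfun : (fun ω => (X x z ω - X x z ω - X x w ω + X x w ω) ^ 2)
        = fun _ => (0:ℝ) := funext fun ω => by ring
    rw [hfun]
    refine ⟨?_, integrable_zero _ _ _⟩
    simp only [sub_self, abs_zero]
    rw [Real.zero_rpow (by positivity : 2 * H₁ ≠ 0), zero_mul]
    simp
  rcases eq_or_ne z w with h | hzw
  · subst h
    have hfun : (fun ω => (X x z ω - X y z ω - X x z ω + X y z ω) ^ 2)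
        = fun _ => (0:ℝ) := funext fun ω => by ring
    rw [hfun]
    refine ⟨?_, integrable_zero _ _ _⟩
    simp only [sub_self, abs_zero]
    rw [Real.zero_rpow (by positivity : 2 * H₂ ≠ 0), mul_zero]
    simp
  rcases hxy.lt_or_gt with h1 | h1 <;> rcases hzw.lt_or_gt with h2 | h2
  · -- x < y, z < w : u = (x, z), h = (y - x, w - z)
    obtain ⟨hval, hint⟩ := lam_rect (X := X) hH₁ hH₂ hL2 hss hsi hnorm
      (u₁ := x) (u₂ := z) (h₁ := y - x) (h₂ := w - z) hx.le hz.le (by linarith) (by linarith)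
    simp only [show x + (y - x) = y from by ring, show z + (w - z) = w from by ring]
      at hval hint
    have hfun : (fun ω => (X y w ω - X x w ω - X y z ω + X x z ω) ^ 2)
        = fun ω => (X x z ω - X y z ω - X x w ω + X y w ω) ^ 2 := funext fun ω => by ring
    rw [hfun] at hval hint
    refine ⟨?_, hint⟩
    rw [hval, abs_of_neg (by linarith : x - y < 0), abs_of_neg (by linarith : z - w < 0)]
    ring_nf
  · -- x < y, w < z : u = (x, w), h = (y - x, z - w)
    obtain ⟨hval, hint⟩ := lam_rect (X := X) hH₁ hH₂ hL2 hss hsi hnorm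
      (u₁ := x) (u₂ := w) (h₁ := y - x) (h₂ := z - w) hx.le hw.le (by linarith) (by linarith)
    simp only [show x + (y - x) = y from by ring, show w + (z - w) = z from by ring]
      at hval hint
    have hfun : (fun ω => (X y z ω - X x z ω - X y w ω + X x w ω) ^ 2)
        = fun ω => (X x z ω - X y z ω - X x w ω + X y w ω) ^ 2 := funext fun ω => by ring
    rw [hfun] at hval hint
    refine ⟨?_, hint⟩
    rw [hval, abs_of_neg (by linarith : x - y < 0), abs_of_pos (by linarith : 0 < z - w)]
    ring_nf
  · -- y < x, z < w : u = (y, z), h = (x - y, w - z)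
    obtain ⟨hval, hint⟩ := lam_rect (X := X) hH₁ hH₂ hL2 hss hsi hnorm
      (u₁ := y) (u₂ := z) (h₁ := x - y) (h₂ := w - z) hy.le hz.le (by linarith) (by linarith)
    simp only [show y + (x - y) = x from by ring, show z + (w - z) = w from by ring]
      at hval hint
    have hfun : (fun ω => (X x w ω - X y w ω - X x z ω + X y z ω) ^ 2)
        = fun ω => (X x z ω - X y z ω - X x w ω + X y w ω) ^ 2 := funext fun ω => by ring
    rw [hfun] at hval hint
    refine ⟨?_, hint⟩
    rw [hval, abs_of_pos (by linarith : 0 < x - y), abs_of_neg (by linarith : z - w < 0)]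
    ring_nf
  · -- y < x, w < z : u = (y, w), h = (x - y, z - w)
    obtain ⟨hval, hint⟩ := lam_rect (X := X) hH₁ hH₂ hL2 hss hsi hnorm
      (u₁ := y) (u₂ := w) (h₁ := x - y) (h₂ := z - w) hy.le hw.le (by linarith) (by linarith)
    simp only [show y + (x - y) = x from by ring, show w + (z - w) = z from by ring]
      at hval hint
    have hfun : (fun ω => (X x z ω - X y z ω - X x w ω + X y w ω) ^ 2)
        = fun ω => (X x z ω - X y z ω - X x w ω + X y w ω) ^ 2 := funext fun ω => by ring
    rw [hfun] at hval hint
    refine ⟨?_, hint⟩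
    rw [hval, abs_of_pos (by linarith : 0 < x - y), abs_of_pos (by linarith : 0 < z - w)]

end Aux5

lemma lam_Ffun (H v : ℝ) :
    Ffun H v = Real.exp (-(H * v))
      * (1 + (Real.exp v) ^ (2 * H) - |Real.exp v - 1| ^ (2 * H)) := by
  have h1 : (Real.exp v) ^ (2 * H) = Real.exp (v * (2 * H)) := by
    rw [Real.rpow_def_of_pos (Real.exp_pos v), Real.log_exp]
  have h2 : Real.exp (-(H * v)) = (Real.exp (-(v / 2))) ^ (2 * H) := by
    rw [Real.rpow_def_of_pos (Real.exp_pos _), Real.log_exp]; ring_nf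
  have h3 : Real.exp (-(v / 2)) * (Real.exp v - 1) = 2 * Real.sinh (v / 2) := by
    have hh : Real.exp (-(v / 2)) * Real.exp v = Real.exp (v / 2) := by
      rw [← Real.exp_add]; ring_nf
    rw [Real.sinh_eq, mul_sub, hh]; ring
  have h4 : Real.exp (-(H * v)) * |Real.exp v - 1| ^ (2 * H)
      = |2 * Real.sinh (v / 2)| ^ (2 * H) := by
    rw [h2, ← Real.mul_rpow (Real.exp_pos _).le (abs_nonneg _)]
    congr 1
    have habs : |Real.exp (-(v/2)) * (Real.exp v - 1)|
        = Real.exp (-(v/2)) * |Real.exp v - 1| := by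
      rw [abs_mul, abs_of_pos (Real.exp_pos _)]
    rw [← habs, h3]
  unfold Ffun
  rw [mul_sub, mul_add, mul_one, h1, ← Real.exp_add, h4, Real.cosh_eq]
  have he : -(H * v) + v * (2 * H) = H * v := by ring
  rw [he]
  ring

/-- Proposition 1 of the paper. For a field with self-similar
covariance, stationary rectangular increments (second moments) and `E[X(1,1)²] = 1`,
the covariance `R` of its Lamperti transform satisfies
`R(v₁,v₂) + R(v₁,−v₂) = (1/2) F_{H₁}(v₁) F_{H₂}(v₂) = 2 R₀(v₁,v₂)`. -/
theorem lamperti_covariance_symmetrization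
    {Ω : Type*} [MeasurableSpace Ω] (P : Measure Ω) [IsProbabilityMeasure P]
    (H₁ H₂ : ℝ) (hH₁ : H₁ ∈ Set.Ioo (0:ℝ) 1) (hH₂ : H₂ ∈ Set.Ioo (0:ℝ) 1)
    (X : ℝ → ℝ → Ω → ℝ)
    (hL2 : ∀ t₁ t₂ : ℝ, 0 ≤ t₁ → 0 ≤ t₂ →
      Integrable (fun ω => (X t₁ t₂ ω) ^ 2) P)
    (hss : ∀ a₁ a₂ : ℝ, 0 < a₁ → 0 < a₂ →
      ∀ t₁ t₂ s₁ s₂ : ℝ, 0 ≤ t₁ → 0 ≤ t₂ → 0 ≤ s₁ → 0 ≤ s₂ →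
        ∫ ω, X (a₁ * t₁) (a₂ * t₂) ω * X (a₁ * s₁) (a₂ * s₂) ω ∂P
          = a₁ ^ (2 * H₁) * a₂ ^ (2 * H₂) * ∫ ω, X t₁ t₂ ω * X s₁ s₂ ω ∂P)
    (hsi : ∀ u₁ u₂ h₁ h₂ : ℝ, 0 ≤ u₁ → 0 ≤ u₂ → 0 ≤ h₁ → 0 ≤ h₂ →
      ∫ ω, (X (u₁ + h₁) (u₂ + h₂) ω - X u₁ (u₂ + h₂) ω
            - X (u₁ + h₁) u₂ ω + X u₁ u₂ ω) ^ 2 ∂P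
        = ∫ ω, (X h₁ h₂ ω - X 0 h₂ ω - X h₁ 0 ω + X 0 0 ω) ^ 2 ∂P)
    (hnorm : ∫ ω, (X 1 1 ω) ^ 2 ∂P = 1)
    (R : ℝ → ℝ → ℝ)
    (hR : ∀ v₁ v₂ : ℝ,
      R v₁ v₂ = Real.exp (-(H₁ * v₁) - H₂ * v₂)
        * ∫ ω, X 1 1 ω * X (Real.exp v₁) (Real.exp v₂) ω ∂P) :
    ∀ v₁ v₂ : ℝ,
      R v₁ v₂ + R v₁ (-v₂) = (1 / 2) * Ffun H₁ v₁ * Ffun H₂ v₂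
      ∧ R v₁ v₂ + R v₁ (-v₂) = 2 * Rzero H₁ H₂ v₁ v₂ := by
  obtain ⟨hH₁0, -⟩ := hH₁
  obtain ⟨hH₂0, -⟩ := hH₂
  intro v₁ v₂
  have ha : (0:ℝ) < Real.exp v₁ := Real.exp_pos v₁
  have hb : (0:ℝ) < Real.exp v₂ := Real.exp_pos v₂
  set a := Real.exp v₁ with hadef
  set b := Real.exp v₂ with hbdef
  -- basic integrability and second moments
  have i11 := hL2 1 1 zero_le_one zero_le_one
  have iBB := hL2 a b ha.le hb.le
  have iCC := hL2 1 b zero_le_one hb.le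
  have iDD := hL2 a 1 ha.le zero_le_one
  have dB := lam_diag (X := X) hss hnorm ha hb
  have dC := lam_diag (X := X) hss hnorm one_pos hb
  have dD := lam_diag (X := X) hss hnorm ha one_pos
  -- rectangle and edge facts
  have hS := lam_rect_sq (X := X) hH₁0 hH₂0 hL2 hss hsi hnorm ha one_pos hb one_pos
  have pBC := lam_prod_h (X := X) hH₁0 hH₂0 hL2 hss hsi hnorm ha one_pos hb
  have pDA := lam_prod_h (X := X) hH₁0 hH₂0 hL2 hss hsi hnorm ha one_pos one_pos
  have pBD := lam_prod_v (X := X) hH₁0 hH₂0 hL2 hss hsi hnorm ha hb one_pos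
  have pCA := lam_prod_v (X := X) hH₁0 hH₂0 hL2 hss hsi hnorm one_pos hb one_pos
  -- the symmetrized sum as a combination of integrable functions
  have hsum_eq : (fun ω => X 1 1 ω * X a b ω + X 1 b ω * X a 1 ω)
      = fun ω => ((X a b ω - X 1 b ω - X a 1 ω + X 1 1 ω) ^ 2
          - ((X 1 1 ω) ^ 2 + (X a b ω) ^ 2 + (X 1 b ω) ^ 2 + (X a 1 ω) ^ 2)) / 2
        + (X a b ω * X 1 b ω + X a b ω * X a 1 ω
            + X 1 b ω * X 1 1 ω + X a 1 ω * X 1 1 ω) :=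
    funext fun ω => by ring
  have iSq1 : Integrable (fun ω => (X 1 1 ω) ^ 2 + (X a b ω) ^ 2) P := i11.add iBB
  have iSq2 : Integrable (fun ω => (X 1 1 ω) ^ 2 + (X a b ω) ^ 2 + (X 1 b ω) ^ 2) P :=
    iSq1.add iCC
  have intSq : Integrable (fun ω => (X 1 1 ω) ^ 2 + (X a b ω) ^ 2 + (X 1 b ω) ^ 2
      + (X a 1 ω) ^ 2) P := iSq2.add iDD
  have intE : Integrable (fun ω => ((X a b ω - X 1 b ω - X a 1 ω + X 1 1 ω) ^ 2
      - ((X 1 1 ω) ^ 2 + (X a b ω) ^ 2 + (X 1 b ω) ^ 2 + (X a 1 ω) ^ 2)) / 2) P :=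
    (hS.2.sub intSq).div_const 2
  have iF1 : Integrable (fun ω => X a b ω * X 1 b ω + X a b ω * X a 1 ω) P :=
    pBC.1.add pBD.1
  have iF2 : Integrable (fun ω => X a b ω * X 1 b ω + X a b ω * X a 1 ω
      + X 1 b ω * X 1 1 ω) P := iF1.add pCA.1
  have intF : Integrable (fun ω => X a b ω * X 1 b ω + X a b ω * X a 1 ω
      + X 1 b ω * X 1 1 ω + X a 1 ω * X 1 1 ω) P := iF2.add pDA.1
  have hg_int : Integrable (fun ω => X 1 1 ω * X a b ω + X 1 b ω * X a 1 ω) P := by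
    rw [hsum_eq]; exact intE.add intF
  have vSq : ∫ ω, ((X 1 1 ω) ^ 2 + (X a b ω) ^ 2 + (X 1 b ω) ^ 2 + (X a 1 ω) ^ 2) ∂P
      = 1 + a ^ (2 * H₁) * b ^ (2 * H₂) + 1 ^ (2 * H₁) * b ^ (2 * H₂)
        + a ^ (2 * H₁) * 1 ^ (2 * H₂) := by
    rw [integral_add iSq2 iDD, integral_add iSq1 iCC, integral_add i11 iBB,
      hnorm, dB, dC, dD]
  have vE : ∫ ω, (((X a b ω - X 1 b ω - X a 1 ω + X 1 1 ω) ^ 2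
      - ((X 1 1 ω) ^ 2 + (X a b ω) ^ 2 + (X 1 b ω) ^ 2 + (X a 1 ω) ^ 2)) / 2) ∂P
      = (|a - 1| ^ (2 * H₁) * |b - 1| ^ (2 * H₂)
        - (1 + a ^ (2 * H₁) * b ^ (2 * H₂) + 1 ^ (2 * H₁) * b ^ (2 * H₂)
            + a ^ (2 * H₁) * 1 ^ (2 * H₂))) / 2 := by
    rw [integral_div, integral_sub hS.2 intSq, hS.1, vSq]
  have vF : ∫ ω, (X a b ω * X 1 b ω + X a b ω * X a 1 ω
      + X 1 b ω * X 1 1 ω + X a 1 ω * X 1 1 ω) ∂P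
      = (a ^ (2 * H₁) + 1 ^ (2 * H₁) - |a - 1| ^ (2 * H₁)) / 2 * b ^ (2 * H₂)
        + a ^ (2 * H₁) * ((b ^ (2 * H₂) + 1 ^ (2 * H₂) - |b - 1| ^ (2 * H₂)) / 2)
        + 1 ^ (2 * H₁) * ((b ^ (2 * H₂) + 1 ^ (2 * H₂) - |b - 1| ^ (2 * H₂)) / 2)
        + (a ^ (2 * H₁) + 1 ^ (2 * H₁) - |a - 1| ^ (2 * H₁)) / 2 * 1 ^ (2 * H₂) := by
    rw [integral_add iF2 pDA.1, integral_add iF1 pCA.1, integral_add pBC.1 pBD.1,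
      pBC.2, pBD.2, pCA.2, pDA.2]
  have hsum_val : ∫ ω, (X 1 1 ω * X a b ω + X 1 b ω * X a 1 ω) ∂P
      = (1 + a ^ (2 * H₁) - |a - 1| ^ (2 * H₁))
        * (1 + b ^ (2 * H₂) - |b - 1| ^ (2 * H₂)) / 2 := by
    rw [hsum_eq, integral_add intE intF, vE, vF]
    simp only [Real.one_rpow]
    ring
  -- measurability via gluing
  have eqsq : ∀ f : Ω → ℝ, (fun ω => (f ω) ^ 2) =ᵐ[P] fun ω => f ω * f ω :=
    fun f => ae_of_all P fun ω => by ring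
  have hmA2 : AEStronglyMeasurable (fun ω => X 1 1 ω * X 1 1 ω) P :=
    i11.aestronglyMeasurable.congr (eqsq _)
  have hmB2 : AEStronglyMeasurable (fun ω => X a b ω * X a b ω) P :=
    iBB.aestronglyMeasurable.congr (eqsq _)
  have hmC2 : AEStronglyMeasurable (fun ω => X 1 b ω * X 1 b ω) P :=
    iCC.aestronglyMeasurable.congr (eqsq _)
  have hmD2 : AEStronglyMeasurable (fun ω => X a 1 ω * X a 1 ω) P :=
    iDD.aestronglyMeasurable.congr (eqsq _)
  have hmAC : AEStronglyMeasurable (fun ω => X 1 1 ω * X 1 b ω) P :=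
    pCA.1.aestronglyMeasurable.congr (ae_of_all P fun ω => mul_comm _ _)
  have hmCB : AEStronglyMeasurable (fun ω => X 1 b ω * X a b ω) P :=
    pBC.1.aestronglyMeasurable.congr (ae_of_all P fun ω => mul_comm _ _)
  have hmAD : AEStronglyMeasurable (fun ω => X 1 1 ω * X a 1 ω) P :=
    pDA.1.aestronglyMeasurable.congr (ae_of_all P fun ω => mul_comm _ _)
  have hmDB : AEStronglyMeasurable (fun ω => X a 1 ω * X a b ω) P :=
    pBD.1.aestronglyMeasurable.congr (ae_of_all P fun ω => mul_comm _ _)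
  have hmS : AEStronglyMeasurable (fun ω => X 1 1 ω * X a b ω + X 1 b ω * X a 1 ω) P :=
    hg_int.aestronglyMeasurable
  have hmAB : AEStronglyMeasurable (fun ω => X 1 1 ω * X a b ω) P :=
    lam_glue (A := X 1 1) (B := X a b) (C := X 1 b) (D := X a 1)
      hmAC hmCB hmAD hmDB hmC2 hmD2 hmS
  have hmS' : AEStronglyMeasurable (fun ω => X 1 b ω * X a 1 ω + X 1 1 ω * X a b ω) P :=
    hmS.congr (ae_of_all P fun ω => add_comm _ _)
  have hmCD : AEStronglyMeasurable (fun ω => X 1 b ω * X a 1 ω) P :=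
    lam_glue (A := X 1 b) (B := X a 1) (C := X 1 1) (D := X a b)
      pCA.1.aestronglyMeasurable hmAD hmCB pBD.1.aestronglyMeasurable hmA2 hmB2 hmS'
  have iAB : Integrable (fun ω => X 1 1 ω * X a b ω) P := by
    refine Integrable.mono' (g := fun ω => ((X 1 1 ω) ^ 2 + (X a b ω) ^ 2) / 2)
      ((i11.add iBB).div_const 2) hmAB ?_
    exact ae_of_all P fun ω => by
      rw [Real.norm_eq_abs]; exact lam_abs_mul_le _ _
  have iCD : Integrable (fun ω => X 1 b ω * X a 1 ω) P := by
    refine Integrable.mono' (g := fun ω => ((X 1 b ω) ^ 2 + (X a 1 ω) ^ 2) / 2)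
      ((iCC.add iDD).div_const 2) hmCD ?_
    exact ae_of_all P fun ω => by
      rw [Real.norm_eq_abs]; exact lam_abs_mul_le _ _
  have hkey : (∫ ω, X 1 1 ω * X a b ω ∂P) + (∫ ω, X 1 b ω * X a 1 ω ∂P)
      = (1 + a ^ (2 * H₁) - |a - 1| ^ (2 * H₁))
        * (1 + b ^ (2 * H₂) - |b - 1| ^ (2 * H₂)) / 2 := by
    rw [← integral_add iAB iCD]
    exact hsum_val
  -- relate R v₁ (-v₂) to the second diagonal product
  have hscale := hss 1 b one_pos hb 1 1 a b⁻¹ zero_le_one zero_le_one ha.le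
    (inv_nonneg.mpr hb.le)
  simp only [one_mul, mul_one, Real.one_rpow, mul_inv_cancel₀ (ne_of_gt hb)] at hscale
  -- hscale : ∫ X 1 b * X a 1 = b ^ (2H₂) * ∫ X 1 1 * X a b⁻¹
  have hbne : b ^ (2 * H₂) ≠ 0 := (Real.rpow_pos_of_pos hb _).ne'
  have hI2 : ∫ ω, X 1 1 ω * X a b⁻¹ ω ∂P
      = (∫ ω, X 1 b ω * X a 1 ω ∂P) / b ^ (2 * H₂) := by
    rw [hscale]; field_simp
  have hb2 : b ^ (2 * H₂) = Real.exp (v₂ * (2 * H₂)) := by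
    rw [hbdef, Real.rpow_def_of_pos (Real.exp_pos _), Real.log_exp]
  have hRv := hR v₁ v₂
  have hRm := hR v₁ (-v₂)
  rw [Real.exp_neg] at hRm
  rw [← hadef, ← hbdef] at hRv hRm
  have hF1 := lam_Ffun H₁ v₁
  have hF2 := lam_Ffun H₂ v₂
  rw [← hadef] at hF1
  rw [← hbdef] at hF2
  have hE1 : Real.exp (-(H₁ * v₁) - H₂ * v₂)
      = Real.exp (-(H₁ * v₁)) * Real.exp (-(H₂ * v₂)) := by
    rw [← Real.exp_add]; ring_nf
  have hE2 : Real.exp (-(H₁ * v₁) - H₂ * -v₂)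
      = Real.exp (-(H₁ * v₁)) * Real.exp (-(H₂ * v₂)) * Real.exp (v₂ * (2 * H₂)) := by
    rw [← Real.exp_add, ← Real.exp_add]; ring_nf
  have hmain : R v₁ v₂ + R v₁ (-v₂)
      = Real.exp (-(H₁ * v₁)) * Real.exp (-(H₂ * v₂))
        * ((∫ ω, X 1 1 ω * X a b ω ∂P) + (∫ ω, X 1 b ω * X a 1 ω ∂P)) := by
    rw [hRv, hRm, hI2, hE1, hE2, hb2]
    have hexne : Real.exp (v₂ * (2 * H₂)) ≠ 0 := (Real.exp_pos _).ne'
    field_simp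
  have hgoal : R v₁ v₂ + R v₁ (-v₂) = (1 / 2) * Ffun H₁ v₁ * Ffun H₂ v₂ := by
    rw [hmain, hkey, hF1, hF2]
    ring
  refine ⟨hgoal, ?_⟩
  rw [hgoal]
  unfold Rzero
  ring
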